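/- Consider a market with n unit-demand buyers and n items in which every optimal allocation allocates all items, giving each buyer exactly one item. Then every legal allocation — an allocation in which each buyer i receives a single item that is allocated to i in some optimal allocation, and all items are allocated — is itself optimal. -/

import Mathlib

open Finset

section Defs

variable {M : Type*} [Fintype M] [DecidableEq M] {ι : Type*} [Fintype ι]

/-- A valuation is monotone. -/
def MonotoneVal (v : Finset M → ℝ) : Prop :=
  ∀ ⦃S T : Finset M⦄, S ⊆ T → v S ≤ v T

/-- Quasi-linear utility of a bundle `S` at prices `p`. -/
def util (v : Finset M → ℝ) (p : M → ℝ) (S : Finset M) : ℝ :=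
  v S - ∑ x ∈ S, p x

/-- `S` is a utility-maximizing bundle for valuation `v` at prices `p`. -/
def InDemand (v : Finset M → ℝ) (p : M → ℝ) (S : Finset M) : Prop :=
  ∀ T : Finset M, util v p T ≤ util v p S

/-- Gross-substitutes valuation. -/
def GrossSubstitutes (v : Finset M → ℝ) : Prop :=
  ∀ p q : M → ℝ, (∀ x, 0 ≤ p x) → (∀ x, 0 ≤ q x) → (∀ x, p x ≤ q x) →
    ∀ A : Finset M, InDemand v p A →
      ∃ B : Finset M, InDemand v q B ∧ ∀ x ∈ A, p x = q x → x ∈ B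

/-- `v` is a `k`-demand (multi-demand) valuation:
`v S` is the maximum of `∑_{x ∈ T} v {x}` over `T ⊆ S` with `|T| ≤ k`. -/
def MultiDemand (v : Finset M → ℝ) (k : ℕ) : Prop :=
  ∀ S : Finset M,
    IsGreatest {t : ℝ | ∃ T ⊆ S, T.card ≤ k ∧ t = ∑ x ∈ T, v {x}} (v S)

/-- `v` is a unit-demand valuation: `v ∅ = 0` and `v S = max_{x ∈ S} v {x}`. -/
def UnitDemand (v : Finset M → ℝ) : Prop :=
  v ∅ = 0 ∧ ∀ S : Finset M, S.Nonempty →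
    IsGreatest {t : ℝ | ∃ x ∈ S, t = v {x}} (v S)

/-- An allocation: a family of pairwise disjoint bundles. -/
def IsAlloc (A : ι → Finset M) : Prop :=
  ∀ i j : ι, i ≠ j → Disjoint (A i) (A j)

/-- Social welfare of an allocation. -/
def SW (v : ι → Finset M → ℝ) (A : ι → Finset M) : ℝ :=
  ∑ i, v i (A i)

/-- An optimal allocation: it maximizes social welfare among allocations. -/
def IsOptimalAlloc (v : ι → Finset M → ℝ) (A : ι → Finset M) : Prop :=
  IsAlloc A ∧ ∀ B : ι → Finset M, IsAlloc B → SW v B ≤ SW v A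

/-- `p` is an optimal dynamic pricing: every demanded bundle of every buyer is
her bundle in some optimal allocation. -/
def IsDynamicPricing (v : ι → Finset M → ℝ) (p : M → ℝ) : Prop :=
  (∀ x, 0 ≤ p x) ∧
  ∀ (i : ι) (S : Finset M), InDemand (v i) p S →
    ∃ A : ι → Finset M, IsOptimalAlloc v A ∧ A i = S

/-- Walrasian equilibrium: every buyer gets a demanded bundle and unallocated
items have price 0. -/
def IsWalrasianEq (v : ι → Finset M → ℝ) (A : ι → Finset M) (p : M → ℝ) : Prop :=
  (∀ x, 0 ≤ p x) ∧ IsAlloc A ∧ (∀ i, InDemand (v i) p (A i)) ∧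
  ∀ x : M, (∀ i, x ∉ A i) → p x = 0

/-- Item `x` is legal for buyer `i`: some optimal allocation gives `x` to `i`. -/
def LegalItem (v : ι → Finset M → ℝ) (i : ι) (x : M) : Prop :=
  ∃ A : ι → Finset M, IsOptimalAlloc v A ∧ x ∈ A i

/-- A bundle `S` is legal for buyer `i`: `|S| = k i` and every item of `S` is legal for `i`. -/
def LegalBundle (v : ι → Finset M → ℝ) (k : ι → ℕ) (i : ι) (S : Finset M) : Prop :=
  S.card = k i ∧ ∀ x ∈ S, LegalItem v i x

/-- A legal allocation: every buyer's bundle is legal for her. -/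
def LegalAlloc (v : ι → Finset M → ℝ) (k : ι → ℕ) (A : ι → Finset M) : Prop :=
  IsAlloc A ∧ ∀ i, LegalBundle v k i (A i)

/-- Submodularity condition (SM). -/
def SMcond (v : Finset M → ℝ) : Prop :=
  ∀ (x y : M) (S : Finset M), x ≠ y → x ∉ S → y ∉ S →
    v S + v (S ∪ {x, y}) ≤ v (S ∪ {x}) + v (S ∪ {y})

/-- Condition (RGP). -/
def RGPcond (v : Finset M → ℝ) : Prop :=
  ∀ (x y z : M) (S : Finset M), x ≠ y → x ≠ z → y ≠ z → x ∉ S → y ∉ S → z ∉ S →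
    v (S ∪ {x}) + v (S ∪ {y, z}) ≤
      max (v (S ∪ {y}) + v (S ∪ {x, z})) (v (S ∪ {z}) + v (S ∪ {x, y}))

/-- Condition (NP-SM) with nonnegative prices. -/
def NPSM (v : Finset M → ℝ) : Prop :=
  ¬ ∃ (p : M → ℝ) (x y : M) (S : Finset M),
      (∀ a, 0 ≤ p a) ∧ x ≠ y ∧ x ∉ S ∧ y ∉ S ∧ 0 < p x ∧ 0 < p y ∧
      InDemand v p S ∧ InDemand v p (S ∪ {x, y}) ∧
      ∀ C : Finset M, InDemand v p C → (C ⊆ S ∨ ∃ T ⊆ S, C = T ∪ {x, y})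

/-- Condition (NP-RGP) with nonnegative prices. -/
def NPRGP (v : Finset M → ℝ) : Prop :=
  ¬ ∃ (p : M → ℝ) (x y z : M) (S : Finset M),
      (∀ a, 0 ≤ p a) ∧ x ≠ y ∧ x ≠ z ∧ y ≠ z ∧ x ∉ S ∧ y ∉ S ∧ z ∉ S ∧
      0 < p x ∧ 0 < p y ∧ 0 < p z ∧
      InDemand v p (S ∪ {x}) ∧ InDemand v p (S ∪ {y, z}) ∧
      ∀ C : Finset M, InDemand v p C →
        ((∃ T ⊆ S, C = T ∪ {x}) ∨ ∃ T ⊆ S, C = T ∪ {y, z})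

end Defs

section AuxBirkhoff
open Finset Matrix
set_option linter.unusedSectionVars false
variable {M : Type*} [Fintype M] [DecidableEq M] {n : ℕ}

/-- welfare linear functional on matrices -/
noncomputable def Lmap (w : Fin n → Fin n → ℝ) : Matrix (Fin n) (Fin n) ℝ →ₗ[ℝ] ℝ where
  toFun X := ∑ i, ∑ j, w i j * X i j
  map_add' X Y := by simp [Matrix.add_apply, mul_add, Finset.sum_add_distrib]
  map_smul' c X := by
    simp only [Matrix.smul_apply, smul_eq_mul, RingHom.id_apply, Finset.mul_sum]
    congr 1; ext i; congr 1; ext j; ring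

lemma Lmap_perm (w : Fin n → Fin n → ℝ) (τ : Equiv.Perm (Fin n)) :
    Lmap w (τ.permMatrix ℝ) = ∑ i, w i (τ i) := by
  simp [Lmap, Equiv.Perm.permMatrix, PEquiv.toMatrix_apply, Equiv.toPEquiv_apply,
    Option.mem_def, mul_ite, eq_comm]

/-- a system of disjoint singletons indexed by `Fin n` with `|M| = n` comes from a permutation -/
lemma exists_perm_of_singletons (e : M ≃ Fin n) (B : Fin n → Finset M)
    (hdisj : ∀ i j : Fin n, i ≠ j → Disjoint (B i) (B j))
    (hc : ∀ i, (B i).card = 1) :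
    ∃ τ : Equiv.Perm (Fin n), ∀ i, B i = {e.symm (τ i)} := by
  have h1 : ∀ i, ∃ a, B i = {a} := fun i => Finset.card_eq_one.1 (hc i)
  choose g hg using h1
  have hginj : Function.Injective g := by
    intro i j hij
    by_contra hne
    have := hdisj i j (fun h => hne (by rw [h]))
    rw [hg i, hg j, hij] at this
    simp at this
  have hf : Function.Injective (fun i => e (g i)) := fun i j h => hginj (e.injective h)
  have hbij : Function.Bijective (fun i => e (g i)) :=
    (Fintype.bijective_iff_injective_and_card _).2 ⟨hf, rfl⟩
  exact ⟨Equiv.ofBijective _ hbij, fun i => by simp [Equiv.ofBijective_apply, hg i]⟩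

end AuxBirkhoff

lemma aux_arith {c o s l : ℝ} (hc : 0 < c) (h1 : o = c * s + (1 - c) * l)
    (h2 : (1 - c) * l ≤ (1 - c) * o) : o ≤ s := by
  by_contra hlt
  push_neg at hlt
  have h3 : 0 < c * (o - s) := mul_pos hc (by linarith)
  nlinarith

set_option maxHeartbeats 1600000 in
/-- In a unit-demand market with `n` buyers and `n` items where
every optimal allocation allocates all items, one per buyer, every legal
allocation is optimal. -/
theorem unit_demand_legal_is_optimal
    {M : Type*} [Fintype M] [DecidableEq M] {n : ℕ}
    (v : Fin n → Finset M → ℝ)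
    (hmono : ∀ i, MonotoneVal (v i)) (hud : ∀ i, UnitDemand (v i))
    (hcard : Fintype.card M = n)
    (hopt : ∀ A : Fin n → Finset M, IsOptimalAlloc v A →
      (∀ x : M, ∃ i, x ∈ A i) ∧ ∀ i, (A i).card = 1)
    (A : Fin n → Finset M) (hA : IsAlloc A)
    (hAcard : ∀ i, (A i).card = 1)
    (hAleg : ∀ i, ∀ x ∈ A i, LegalItem v i x)
    (hAall : ∀ x : M, ∃ i, x ∈ A i) :
    IsOptimalAlloc v A := by
  classical
  set e : M ≃ Fin n := Fintype.equivFinOfCardEq hcard with he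
  set w : Fin n → Fin n → ℝ := fun i j => v i {e.symm j} with hw
  -- existence of an optimal allocation
  obtain ⟨W, hWmem, hWmax⟩ :=
    (Finset.univ.filter (fun B : Fin n → Finset M => IsAlloc B)).exists_max_image (SW v)
      ⟨fun _ => ∅, Finset.mem_filter.2 ⟨Finset.mem_univ _, by simp [IsAlloc]⟩⟩
  have hWalloc : IsAlloc W := (Finset.mem_filter.1 hWmem).2
  have hWopt : IsOptimalAlloc v W :=
    ⟨hWalloc, fun B hB => hWmax B (Finset.mem_filter.2 ⟨Finset.mem_univ _, hB⟩)⟩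
  set OPT : ℝ := SW v W with hOPT
  have hle : ∀ B : Fin n → Finset M, IsAlloc B → SW v B ≤ OPT := hWopt.2
  -- welfare of permutation allocations
  have hpermalloc : ∀ τ : Equiv.Perm (Fin n), IsAlloc (fun i => ({e.symm (τ i)} : Finset M)) := by
    intro τ i j hij
    simp only [Finset.disjoint_singleton]
    exact fun h => hij (τ.injective (e.symm.injective h))
  have hpermSW : ∀ τ : Equiv.Perm (Fin n), Lmap w (τ.permMatrix ℝ) ≤ OPT := by
    intro τ
    rw [Lmap_perm]
    exact hle _ (hpermalloc τ)
  -- the set of optimal allocations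
  set F : Finset (Fin n → Finset M) :=
    Finset.univ.filter (fun B => IsOptimalAlloc v B) with hF
  have hWF : W ∈ F := Finset.mem_filter.2 ⟨Finset.mem_univ _, hWopt⟩
  set N : ℕ := F.card with hN
  have hNpos : 0 < N := Finset.card_pos.2 ⟨W, hWF⟩
  have hNR : (0:ℝ) < N := Nat.cast_pos.2 hNpos
  have hNinvpos : (0:ℝ) < (N:ℝ)⁻¹ := inv_pos.2 hNR
  -- for each optimal allocation, its permutation
  have hBperm : ∀ B ∈ F, ∃ τ : Equiv.Perm (Fin n), ∀ i, B i = {e.symm (τ i)} := by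
    intro B hB
    have hBopt : IsOptimalAlloc v B := (Finset.mem_filter.1 hB).2
    exact exists_perm_of_singletons e B hBopt.1 (hopt B hBopt).2
  choose! π hπ using hBperm
  -- each optimal allocation has welfare OPT
  have hSWF : ∀ B ∈ F, SW v B = OPT := by
    intro B hB
    have hBopt : IsOptimalAlloc v B := (Finset.mem_filter.1 hB).2
    exact le_antisymm (hle B hBopt.1) (hBopt.2 W hWalloc)
  -- permutation of A
  obtain ⟨σ, hσ⟩ := exists_perm_of_singletons e A hA hAcard
  -- the average matrix z
  set z : Matrix (Fin n) (Fin n) ℝ :=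
    (N:ℝ)⁻¹ • ∑ B ∈ F, (π B).permMatrix ℝ with hz
  have hsum_apply : ∀ i j, (∑ B ∈ F, (π B).permMatrix ℝ) i j
      = ∑ B ∈ F, (π B).permMatrix ℝ i j := by
    intro i j
    rw [Matrix.sum_apply]
  have hentry : ∀ B i j, (0:ℝ) ≤ (π B).permMatrix ℝ i j := fun B i j =>
    nonneg_of_mem_doublyStochastic (R := ℝ) permMatrix_mem_doublyStochastic
  have hzDS : z ∈ doublyStochastic ℝ (Fin n) := by
    rw [mem_doublyStochastic_iff_sum]
    refine ⟨fun i j => ?_, fun i => ?_, fun j => ?_⟩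
    · rw [hz, Matrix.smul_apply, hsum_apply, smul_eq_mul]
      exact mul_nonneg hNinvpos.le (Finset.sum_nonneg fun B _ => hentry B i j)
    · have : ∀ j, z i j = (N:ℝ)⁻¹ * ∑ B ∈ F, (π B).permMatrix ℝ i j := fun j => by
        rw [hz, Matrix.smul_apply, hsum_apply, smul_eq_mul]
      simp only [this, ← Finset.mul_sum]
      rw [Finset.sum_comm]
      have : ∀ B ∈ F, ∑ j, (π B).permMatrix ℝ i j = 1 := fun B _ =>
        sum_row_of_mem_doublyStochastic (R := ℝ) permMatrix_mem_doublyStochastic i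
      rw [Finset.sum_congr rfl this, Finset.sum_const, nsmul_eq_mul, mul_one]
      field_simp
      rfl
    · have : ∀ i, z i j = (N:ℝ)⁻¹ * ∑ B ∈ F, (π B).permMatrix ℝ i j := fun i => by
        rw [hz, Matrix.smul_apply, hsum_apply, smul_eq_mul]
      simp only [this, ← Finset.mul_sum]
      rw [Finset.sum_comm]
      have : ∀ B ∈ F, ∑ i, (π B).permMatrix ℝ i j = 1 := fun B _ =>
        sum_col_of_mem_doublyStochastic (R := ℝ) permMatrix_mem_doublyStochastic j
      rw [Finset.sum_congr rfl this, Finset.sum_const, nsmul_eq_mul, mul_one]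
      field_simp
      rfl
  -- key legality lower bound
  have hzkey : ∀ i, (N:ℝ)⁻¹ ≤ z i (σ i) := by
    intro i
    have hxA : e.symm (σ i) ∈ A i := by rw [hσ i]; exact Finset.mem_singleton_self _
    obtain ⟨C, hCopt, hxC⟩ := hAleg i _ hxA
    have hCF : C ∈ F := Finset.mem_filter.2 ⟨Finset.mem_univ _, hCopt⟩
    have hCi : C i = {e.symm (π C i)} := hπ C hCF i
    have hπσ : π C i = σ i := by
      rw [hCi, Finset.mem_singleton] at hxC
      exact e.symm.injective hxC.symm
    have hone : (π C).permMatrix ℝ i (σ i) = 1 := by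
      simp [Equiv.Perm.permMatrix, PEquiv.toMatrix_apply, Equiv.toPEquiv_apply, hπσ]
    have : (1:ℝ) ≤ ∑ B ∈ F, (π B).permMatrix ℝ i (σ i) := by
      calc (1:ℝ) = (π C).permMatrix ℝ i (σ i) := hone.symm
        _ ≤ _ := Finset.single_le_sum (fun B _ => hentry B i (σ i)) hCF
    rw [hz, Matrix.smul_apply, hsum_apply, smul_eq_mul]
    calc (N:ℝ)⁻¹ = (N:ℝ)⁻¹ * 1 := (mul_one _).symm
      _ ≤ _ := by
        exact mul_le_mul_of_nonneg_left this hNinvpos.le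
  -- welfare of A and of z
  have hLσ : Lmap w (σ.permMatrix ℝ) = SW v A := by
    rw [Lmap_perm, SW]
    exact Finset.sum_congr rfl fun i _ => by rw [hσ i]
  have hLz : Lmap w z = OPT := by
    rw [hz, _root_.map_smul, map_sum, smul_eq_mul]
    have : ∀ B ∈ F, Lmap w ((π B).permMatrix ℝ) = OPT := by
      intro B hB
      rw [Lmap_perm]
      rw [← hSWF B hB, SW]
      exact Finset.sum_congr rfl fun i _ => by rw [hπ B hB i]
    rw [Finset.sum_congr rfl this, Finset.sum_const, nsmul_eq_mul]
    field_simp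
    rfl
  -- the residual matrix
  set Y : Matrix (Fin n) (Fin n) ℝ := z - (N:ℝ)⁻¹ • σ.permMatrix ℝ with hY
  have hNinv1 : (N:ℝ)⁻¹ ≤ 1 := by
    rw [inv_le_one_iff₀]
    right
    exact_mod_cast hNpos
  have hs : (0:ℝ) ≤ 1 - (N:ℝ)⁻¹ := by linarith
  have hYs : ∃ Z' ∈ doublyStochastic ℝ (Fin n), Y = (1 - (N:ℝ)⁻¹) • Z' := by
    rw [exists_mem_doublyStochastic_eq_smul_iff hs]
    rw [mem_doublyStochastic_iff_sum] at hzDS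
    refine ⟨fun i j => ?_, fun i => ?_, fun j => ?_⟩
    · rw [hY, Matrix.sub_apply, Matrix.smul_apply, smul_eq_mul, sub_nonneg]
      by_cases hij : σ i = j
      · subst hij
        calc (N:ℝ)⁻¹ * σ.permMatrix ℝ i (σ i) ≤ (N:ℝ)⁻¹ * 1 := by
              refine mul_le_mul_of_nonneg_left ?_ hNinvpos.le
              exact le_one_of_mem_doublyStochastic permMatrix_mem_doublyStochastic
          _ = (N:ℝ)⁻¹ := mul_one _
          _ ≤ z i (σ i) := hzkey i
      · have : σ.permMatrix ℝ i j = 0 := by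
          simp [Equiv.Perm.permMatrix, PEquiv.toMatrix_apply, Equiv.toPEquiv_apply, hij]
        rw [this, mul_zero]
        exact hzDS.1 i j
    · simp only [hY, Matrix.sub_apply, Matrix.smul_apply, smul_eq_mul,
        Finset.sum_sub_distrib, ← Finset.mul_sum]
      rw [hzDS.2.1 i,
        sum_row_of_mem_doublyStochastic (R := ℝ) permMatrix_mem_doublyStochastic i, mul_one]
    · simp only [hY, Matrix.sub_apply, Matrix.smul_apply, smul_eq_mul,
        Finset.sum_sub_distrib, ← Finset.mul_sum]
      rw [hzDS.2.2 j,
        sum_col_of_mem_doublyStochastic (R := ℝ) permMatrix_mem_doublyStochastic j, mul_one]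
  obtain ⟨Z', hZ'DS, hYeq⟩ := hYs
  -- Birkhoff: decompose Z' and bound its welfare
  obtain ⟨wt, hwt0, hwt1, hwtsum⟩ := exists_eq_sum_perm_of_mem_doublyStochastic hZ'DS
  have hLZ' : Lmap w Z' ≤ OPT := by
    rw [← hwtsum, map_sum]
    calc ∑ τ : Equiv.Perm (Fin n), Lmap w (wt τ • τ.permMatrix ℝ)
        = ∑ τ : Equiv.Perm (Fin n), wt τ * Lmap w (τ.permMatrix ℝ) := by
          exact Finset.sum_congr rfl fun τ _ => by rw [_root_.map_smul, smul_eq_mul]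
      _ ≤ ∑ τ : Equiv.Perm (Fin n), wt τ * OPT :=
          Finset.sum_le_sum fun τ _ => mul_le_mul_of_nonneg_left (hpermSW τ) (hwt0 τ)
      _ = OPT := by rw [← Finset.sum_mul, hwt1, one_mul]
  -- put everything together
  have hzsplit : z = (N:ℝ)⁻¹ • σ.permMatrix ℝ + Y := by rw [hY]; abel
  have hfinal : OPT = (N:ℝ)⁻¹ * SW v A + (1 - (N:ℝ)⁻¹) * Lmap w Z' := by
    rw [← hLz, hzsplit, map_add, _root_.map_smul, smul_eq_mul, hLσ, hYeq, _root_.map_smul, smul_eq_mul]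
  have hOPTle : OPT ≤ SW v A := by
    have h1 : (1 - (N:ℝ)⁻¹) * Lmap w Z' ≤ (1 - (N:ℝ)⁻¹) * OPT :=
      mul_le_mul_of_nonneg_left hLZ' hs
    exact aux_arith hNinvpos hfinal h1
  exact ⟨hA, fun B hB => le_trans (hle B hB) hOPTle⟩
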